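/- Let F be a field and I = (X^4, X^3Y, XY^3, Y^4) in F[X,Y]. Then the Ratliff-Rush closure of I equals (X,Y)^4, i.e. ⋃_{k≥0} (I^{k+1} : I^k) = (X,Y)^4 (so I is not Ratliff-Rush closed), and for every n ≥ 2 one has I^n = (X,Y)^{4n} (so every power I^n with n ≥ 2 is Ratliff-Rush closed). -/

import Mathlib

/-- The Ratliff-Rush closure of the power `I^n`:  `⋃_{k≥0} (I^{n+k} : I^k)`. -/
noncomputable def rrPow {R : Type*} [CommRing R] (I : Ideal R) (n : ℕ) : Ideal R :=
  ⨆ k : ℕ, (I ^ (n + k)).colon ((I ^ k : Ideal R) : Set R)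


open MvPolynomial Finsupp

namespace RR16aux

variable {F : Type*} [Field F]

def Md (F : Type*) [Field F] (d : ℕ) : Set (MvPolynomial (Fin 2) F) :=
  (fun s => monomial s (1 : F)) '' {s | s 0 + s 1 = d}

lemma fin2_eq (s : Fin 2 →₀ ℕ) :
    s = Finsupp.single 0 (s 0) + Finsupp.single 1 (s 1) := by
  ext i; fin_cases i <;> simp [Finsupp.single_apply]

lemma monomial_eq_xy (s : Fin 2 →₀ ℕ) :
    (monomial s (1 : F)) = X 0 ^ s 0 * X 1 ^ s 1 := by
  conv_lhs => rw [fin2_eq s]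
  rw [X_pow_eq_monomial, X_pow_eq_monomial, monomial_mul, mul_one]

lemma mem_Md {f : MvPolynomial (Fin 2) F} {d : ℕ} :
    f ∈ Ideal.span (Md F d) ↔ ∀ s ∈ f.support, d ≤ s 0 + s 1 := by
  rw [Md, mem_ideal_span_monomial_image]
  constructor
  · intro h s hs
    obtain ⟨si, hsi, hle⟩ := h s hs
    have hsi' : si 0 + si 1 = d := hsi
    have h0 := Finsupp.le_def.mp hle 0
    have h1 := Finsupp.le_def.mp hle 1
    omega
  · intro h s hs
    have hd := h s hs
    refine ⟨Finsupp.single 0 (min (s 0) d) + Finsupp.single 1 (d - min (s 0) d), ?_, ?_⟩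
    · show _ + _ = d
      simp [Finsupp.single_apply]
      all_goals omega
    · rw [Finsupp.le_def]
      intro i
      fin_cases i <;> simp [Finsupp.single_apply] <;> omega

lemma xy_mem_Md {a b d : ℕ} (h : d ≤ a + b) :
    (X 0 ^ a * X 1 ^ b : MvPolynomial (Fin 2) F) ∈ Ideal.span (Md F d) := by
  have hmono : (monomial (Finsupp.single (0 : Fin 2) a + Finsupp.single 1 b) (1 : F)) =
      X 0 ^ a * X 1 ^ b := by
    rw [X_pow_eq_monomial, X_pow_eq_monomial, monomial_mul, mul_one]
  rw [← hmono]
  classical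
  refine mem_Md.mpr ?_
  intro s hs
  rw [support_monomial, if_neg one_ne_zero, Finset.mem_singleton] at hs
  subst hs
  simp [Finsupp.single_apply]
  omega

lemma xy_mem_mpow {a b d : ℕ} (h : d ≤ a + b) :
    (X 0 ^ a * X 1 ^ b : MvPolynomial (Fin 2) F) ∈
      (Ideal.span {X 0, X 1} : Ideal (MvPolynomial (Fin 2) F)) ^ d := by
  have hx : (X 0 : MvPolynomial (Fin 2) F) ∈ Ideal.span {X 0, X 1} :=
    Ideal.subset_span (by simp)
  have hy : (X 1 : MvPolynomial (Fin 2) F) ∈ Ideal.span {X 0, X 1} :=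
    Ideal.subset_span (by simp)
  have h1 : (X 0 ^ a * X 1 ^ b : MvPolynomial (Fin 2) F) ∈
      (Ideal.span {X 0, X 1}) ^ (a + b) := by
    rw [pow_add]
    exact Ideal.mul_mem_mul (Ideal.pow_mem_pow hx a) (Ideal.pow_mem_pow hy b)
  exact Ideal.pow_le_pow_right h h1

/-- products of span-Md ideals -/
lemma Md_mul_le {a b : ℕ} :
    Ideal.span (Md F a) * Ideal.span (Md F b) ≤ Ideal.span (Md F (a + b)) := by
  rw [Ideal.mul_le]
  intro f hf g hg
  refine mem_Md.mpr fun s hs => ?_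
  have := MvPolynomial.support_mul f g hs
  rw [Finset.mem_add] at this
  obtain ⟨u, hu, v, hv, rfl⟩ := this
  have h1 := mem_Md.mp hf u hu
  have h2 := mem_Md.mp hg v hv
  have e0 : (u + v) 0 = u 0 + v 0 := rfl
  have e1 : (u + v) 1 = u 1 + v 1 := rfl
  omega

lemma span_pow_eq_Md (d : ℕ) :
    (Ideal.span {X 0, X 1} : Ideal (MvPolynomial (Fin 2) F)) ^ d = Ideal.span (Md F d) := by
  refine le_antisymm ?_ ?_
  · induction d with
    | zero =>
      rw [pow_zero, Ideal.one_eq_top]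
      intro f _
      exact mem_Md.mpr fun s _ => Nat.zero_le _
    | succ n ih =>
      rw [pow_succ]
      have hxy : (Ideal.span {X 0, X 1} : Ideal (MvPolynomial (Fin 2) F)) ≤
          Ideal.span (Md F 1) := by
        rw [Ideal.span_le]
        rintro z (rfl | rfl)
        · simpa using xy_mem_Md (a := 1) (b := 0) (d := 1) (by norm_num)
        · simpa using xy_mem_Md (a := 0) (b := 1) (d := 1) (by norm_num)
      exact le_trans (Ideal.mul_mono ih hxy) Md_mul_le
  · rw [Ideal.span_le]
    rintro z ⟨s, hs, rfl⟩
    have hs' : s 0 + s 1 = d := hs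
    show (monomial s (1 : F)) ∈ _
    rw [monomial_eq_xy]
    exact xy_mem_mpow (by omega)

/-- dividing by a power of X₀ -/
lemma div_xpow {f : MvPolynomial (Fin 2) F} {j D : ℕ}
    (h : f * X 0 ^ j ∈ Ideal.span (Md F D)) : f ∈ Ideal.span (Md F (D - j)) := by
  refine mem_Md.mpr fun s hs => ?_
  have hc : coeff (s + Finsupp.single 0 j) (f * X 0 ^ j) = coeff s f := by
    rw [X_pow_eq_monomial, coeff_mul_monomial, mul_one]
  have hmem : s + Finsupp.single 0 j ∈ (f * X 0 ^ j).support := by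
    rw [MvPolynomial.mem_support_iff, hc]
    exact MvPolynomial.mem_support_iff.mp hs
  have := mem_Md.mp h _ hmem
  have e0 : (s + Finsupp.single (0 : Fin 2) j) 0 = s 0 + j := by
    simp [Finsupp.single_apply]
  have e1 : (s + Finsupp.single (0 : Fin 2) j) 1 = s 1 := by
    simp [Finsupp.single_apply]
  omega


noncomputable def Ig (F : Type*) [Field F] : Ideal (MvPolynomial (Fin 2) F) :=
  Ideal.span {X 0 ^ 4, X 0 ^ 3 * X 1, X 0 * X 1 ^ 3, X 1 ^ 4}

lemma g1_mem : (X 0 ^ 4 : MvPolynomial (Fin 2) F) ∈ Ig F := Ideal.subset_span (by simp)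
lemma g2_mem : (X 0 ^ 3 * X 1 : MvPolynomial (Fin 2) F) ∈ Ig F := Ideal.subset_span (by simp)
lemma g3_mem : (X 0 * X 1 ^ 3 : MvPolynomial (Fin 2) F) ∈ Ig F := Ideal.subset_span (by simp)
lemma g4_mem : (X 1 ^ 4 : MvPolynomial (Fin 2) F) ∈ Ig F := Ideal.subset_span (by simp)

lemma Ig_le : Ig F ≤ Ideal.span {X 0, X 1} ^ 4 := by
  rw [Ig, Ideal.span_le]
  rintro z hz
  simp only [Set.mem_insert_iff, Set.mem_singleton_iff] at hz
  rcases hz with rfl | rfl | rfl | rfl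
  · simpa using xy_mem_mpow (F := F) (a := 4) (b := 0) (by norm_num)
  · simpa using xy_mem_mpow (F := F) (a := 3) (b := 1) (by norm_num)
  · simpa using xy_mem_mpow (F := F) (a := 1) (b := 3) (by norm_num)
  · simpa using xy_mem_mpow (F := F) (a := 0) (b := 4) (by norm_num)

lemma m8_le : Ideal.span (Md F 8) ≤ Ig F * Ig F := by
  rw [Ideal.span_le]
  rintro z ⟨s, hs, rfl⟩
  have hs' : s 0 + s 1 = 8 := hs
  show (monomial s (1 : F)) ∈ _
  rw [monomial_eq_xy]
  have key : ∀ a b : ℕ, a + b = 8 →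
      (X 0 ^ a * X 1 ^ b : MvPolynomial (Fin 2) F) ∈ Ig F * Ig F := by
    intro a b hab
    have ha : a ≤ 8 := by omega
    interval_cases a
    · obtain rfl : b = 8 := by omega
      have e : (X 0 ^ 0 * X 1 ^ 8 : MvPolynomial (Fin 2) F) = X 1 ^ 4 * X 1 ^ 4 := by ring
      rw [e]; exact Ideal.mul_mem_mul g4_mem g4_mem
    · obtain rfl : b = 7 := by omega
      have e : (X 0 ^ 1 * X 1 ^ 7 : MvPolynomial (Fin 2) F) = (X 0 * X 1 ^ 3) * X 1 ^ 4 := by ring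
      rw [e]; exact Ideal.mul_mem_mul g3_mem g4_mem
    · obtain rfl : b = 6 := by omega
      have e : (X 0 ^ 2 * X 1 ^ 6 : MvPolynomial (Fin 2) F) =
        (X 0 * X 1 ^ 3) * (X 0 * X 1 ^ 3) := by ring
      rw [e]; exact Ideal.mul_mem_mul g3_mem g3_mem
    · obtain rfl : b = 5 := by omega
      have e : (X 0 ^ 3 * X 1 ^ 5 : MvPolynomial (Fin 2) F) = (X 0 ^ 3 * X 1) * X 1 ^ 4 := by ring
      rw [e]; exact Ideal.mul_mem_mul g2_mem g4_mem
    · obtain rfl : b = 4 := by omega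
      have e : (X 0 ^ 4 * X 1 ^ 4 : MvPolynomial (Fin 2) F) = X 0 ^ 4 * X 1 ^ 4 := by ring
      rw [e]; exact Ideal.mul_mem_mul g1_mem g4_mem
    · obtain rfl : b = 3 := by omega
      have e : (X 0 ^ 5 * X 1 ^ 3 : MvPolynomial (Fin 2) F) = X 0 ^ 4 * (X 0 * X 1 ^ 3) := by ring
      rw [e]; exact Ideal.mul_mem_mul g1_mem g3_mem
    · obtain rfl : b = 2 := by omega
      have e : (X 0 ^ 6 * X 1 ^ 2 : MvPolynomial (Fin 2) F) =
        (X 0 ^ 3 * X 1) * (X 0 ^ 3 * X 1) := by ring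
      rw [e]; exact Ideal.mul_mem_mul g2_mem g2_mem
    · obtain rfl : b = 1 := by omega
      have e : (X 0 ^ 7 * X 1 ^ 1 : MvPolynomial (Fin 2) F) = X 0 ^ 4 * (X 0 ^ 3 * X 1) := by ring
      rw [e]; exact Ideal.mul_mem_mul g1_mem g2_mem
    · obtain rfl : b = 0 := by omega
      have e : (X 0 ^ 8 * X 1 ^ 0 : MvPolynomial (Fin 2) F) = X 0 ^ 4 * X 0 ^ 4 := by ring
      rw [e]; exact Ideal.mul_mem_mul g1_mem g1_mem
  exact key _ _ hs'

lemma step_le {n : ℕ} (hn : 1 ≤ n) :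
    Ideal.span (Md F (4 * n + 4)) ≤ Ig F * Ideal.span {X 0, X 1} ^ (4 * n) := by
  rw [Ideal.span_le]
  rintro z ⟨s, hs, rfl⟩
  have hs' : s 0 + s 1 = 4 * n + 4 := hs
  show (monomial s (1 : F)) ∈ _
  rw [monomial_eq_xy]
  have key : ∀ a b : ℕ, a + b = 4 * n + 4 →
      (X 0 ^ a * X 1 ^ b : MvPolynomial (Fin 2) F) ∈
        Ig F * Ideal.span {X 0, X 1} ^ (4 * n) := by
    intro a b hab
    rcases le_or_gt 4 a with ha | ha
    · obtain ⟨c, rfl⟩ : ∃ c, a = c + 4 := ⟨a - 4, by omega⟩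
      have e : (X 0 ^ (c + 4) * X 1 ^ b : MvPolynomial (Fin 2) F) =
        X 0 ^ 4 * (X 0 ^ c * X 1 ^ b) := by ring
      rw [e]; exact Ideal.mul_mem_mul g1_mem (xy_mem_mpow (by omega))
    · interval_cases a
      · obtain ⟨c, rfl⟩ : ∃ c, b = c + 4 := ⟨b - 4, by omega⟩
        have e : (X 0 ^ 0 * X 1 ^ (c + 4) : MvPolynomial (Fin 2) F) =
          X 1 ^ 4 * (X 0 ^ 0 * X 1 ^ c) := by ring
        rw [e]; exact Ideal.mul_mem_mul g4_mem (xy_mem_mpow (by omega))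
      · obtain ⟨c, rfl⟩ : ∃ c, b = c + 3 := ⟨b - 3, by omega⟩
        have e : (X 0 ^ 1 * X 1 ^ (c + 3) : MvPolynomial (Fin 2) F) =
          (X 0 * X 1 ^ 3) * (X 0 ^ 0 * X 1 ^ c) := by ring
        rw [e]; exact Ideal.mul_mem_mul g3_mem (xy_mem_mpow (by omega))
      · obtain ⟨c, rfl⟩ : ∃ c, b = c + 3 := ⟨b - 3, by omega⟩
        have e : (X 0 ^ 2 * X 1 ^ (c + 3) : MvPolynomial (Fin 2) F) =
          (X 0 * X 1 ^ 3) * (X 0 ^ 1 * X 1 ^ c) := by ring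
        rw [e]; exact Ideal.mul_mem_mul g3_mem (xy_mem_mpow (by omega))
      · obtain ⟨c, rfl⟩ : ∃ c, b = c + 1 := ⟨b - 1, by omega⟩
        have e : (X 0 ^ 3 * X 1 ^ (c + 1) : MvPolynomial (Fin 2) F) =
          (X 0 ^ 3 * X 1) * (X 0 ^ 0 * X 1 ^ c) := by ring
        rw [e]; exact Ideal.mul_mem_mul g2_mem (xy_mem_mpow (by omega))
  exact key _ _ hs'

lemma Ig_pow {n : ℕ} (hn : 2 ≤ n) :
    Ig F ^ n = Ideal.span {X 0, X 1} ^ (4 * n) := by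
  induction n, hn using Nat.le_induction with
  | base =>
    refine le_antisymm ?_ ?_
    · have h1 : Ig F ^ 2 ≤ (Ideal.span {X 0, X 1} ^ 4) ^ 2 := Ideal.pow_right_mono Ig_le 2
      rwa [← pow_mul] at h1
    · have h2 : (Ideal.span {X 0, X 1} : Ideal (MvPolynomial (Fin 2) F)) ^ (4 * 2) =
          Ideal.span (Md F 8) := by rw [span_pow_eq_Md]
      rw [h2, pow_two]
      exact m8_le
  | succ n hn ih =>
    refine le_antisymm ?_ ?_
    · rw [pow_succ, ih]
      have : Ideal.span {X 0, X 1} ^ (4 * n) * Ig F ≤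
          Ideal.span {X 0, X 1} ^ (4 * n) * Ideal.span {X 0, X 1} ^ 4 :=
        Ideal.mul_mono le_rfl Ig_le
      refine le_trans this ?_
      rw [← pow_add]
      have : 4 * n + 4 = 4 * (n + 1) := by ring
      rw [this]
    · have e : 4 * (n + 1) = 4 * n + 4 := by ring
      rw [e, span_pow_eq_Md]
      refine le_trans (step_le (by omega)) ?_
      rw [pow_succ, ← ih, mul_comm]

lemma le_rr {R : Type*} [CommRing R] (I : Ideal R) (n : ℕ) : I ^ n ≤ rrPow I n := by
  refine le_trans ?_ (le_iSup (fun k => (I ^ (n + k)).colon ((I ^ k : Ideal R) : Set R)) 0)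
  intro f hf
  rw [Submodule.mem_colon]
  intro p hp
  rw [smul_eq_mul, Nat.add_zero]
  exact Ideal.mul_mem_right p _ hf

lemma rrU (n : ℕ) : rrPow (Ig F) n ≤ Ideal.span {X 0, X 1} ^ (4 * n) := by
  rw [rrPow]
  refine iSup_le fun k => ?_
  intro f hf
  have hx4k : ((X 0 : MvPolynomial (Fin 2) F) ^ 4) ^ k ∈ Ig F ^ k :=
    Ideal.pow_mem_pow g1_mem k
  have h1 : f * (X 0 ^ 4) ^ k ∈ Ig F ^ (n + k) := by
    have := Submodule.mem_colon.mp hf _ hx4k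
    simpa [smul_eq_mul] using this
  have h2 : Ig F ^ (n + k) ≤ Ideal.span {X 0, X 1} ^ (4 * (n + k)) := by
    have := Ideal.pow_right_mono (Ig_le (F := F)) (n + k)
    rwa [← pow_mul] at this
  have h3 : f * X 0 ^ (4 * k) ∈ Ideal.span (Md F (4 * (n + k))) := by
    rw [← span_pow_eq_Md, pow_mul (X 0) 4 k]
    exact h2 h1
  have h4 := div_xpow h3
  rw [span_pow_eq_Md]
  have e : 4 * (n + k) - 4 * k = 4 * n := by omega
  rwa [e] at h4

lemma m4_le_rr : Ideal.span {X 0, X 1} ^ 4 ≤ rrPow (Ig F) 1 := by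
  refine le_trans ?_ (le_iSup (fun k => (Ig F ^ (1 + k)).colon ((Ig F ^ k : Ideal (MvPolynomial (Fin 2) F)) : Set (MvPolynomial (Fin 2) F))) 1)
  intro f hf
  rw [Submodule.mem_colon]
  intro p hp
  rw [smul_eq_mul]
  rw [pow_one] at hp
  have h1 : f * p ∈ (Ideal.span {X 0, X 1} : Ideal (MvPolynomial (Fin 2) F)) ^ 4 *
      Ideal.span {X 0, X 1} ^ 4 :=
    Ideal.mul_mem_mul hf (Ig_le hp)
  have h2 : Ig F ^ (1 + 1) = Ideal.span {X 0, X 1} ^ (4 * 2) := Ig_pow le_rfl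
  rw [h2, show (4 * 2 : ℕ) = 4 + 4 from rfl, pow_add]
  exact h1

lemma gens_eq : ({X 0 ^ 4, X 0 ^ 3 * X 1, X 0 * X 1 ^ 3, X 1 ^ 4} :
      Set (MvPolynomial (Fin 2) F)) =
    (fun s => monomial s (1 : F)) ''
      ({Finsupp.single 0 4, Finsupp.single 0 3 + Finsupp.single 1 1,
        Finsupp.single 0 1 + Finsupp.single 1 3, Finsupp.single 1 4} :
        Set (Fin 2 →₀ ℕ)) := by
  rw [Set.image_insert_eq, Set.image_insert_eq, Set.image_insert_eq, Set.image_singleton]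
  have e1 : (monomial (Finsupp.single (0 : Fin 2) 4) (1 : F)) = X 0 ^ 4 :=
    X_pow_eq_monomial.symm
  have e2 : (monomial (Finsupp.single (0 : Fin 2) 3 + Finsupp.single 1 1) (1 : F)) =
      X 0 ^ 3 * X 1 := by
    rw [show (X 0 ^ 3 * X 1 : MvPolynomial (Fin 2) F) = X 0 ^ 3 * X 1 ^ 1 by ring,
      X_pow_eq_monomial, X_pow_eq_monomial, monomial_mul, mul_one]
  have e3 : (monomial (Finsupp.single (0 : Fin 2) 1 + Finsupp.single 1 3) (1 : F)) =
      X 0 * X 1 ^ 3 := by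
    rw [show (X 0 * X 1 ^ 3 : MvPolynomial (Fin 2) F) = X 0 ^ 1 * X 1 ^ 3 by ring,
      X_pow_eq_monomial, X_pow_eq_monomial, monomial_mul, mul_one]
  have e4 : (monomial (Finsupp.single (1 : Fin 2) 4) (1 : F)) = X 1 ^ 4 :=
    X_pow_eq_monomial.symm
  rw [e1, e2, e3, e4]

lemma x2y2_not_mem : (X 0 ^ 2 * X 1 ^ 2 : MvPolynomial (Fin 2) F) ∉ Ig F := by
  classical
  intro h
  rw [Ig, gens_eq, mem_ideal_span_monomial_image] at h
  have hm : (monomial (Finsupp.single (0 : Fin 2) 2 + Finsupp.single 1 2) (1 : F)) =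
      X 0 ^ 2 * X 1 ^ 2 := by
    rw [X_pow_eq_monomial, X_pow_eq_monomial, monomial_mul, mul_one]
  have hx : (Finsupp.single (0 : Fin 2) 2 + Finsupp.single 1 2) ∈
      (X 0 ^ 2 * X 1 ^ 2 : MvPolynomial (Fin 2) F).support := by
    rw [← hm, support_monomial, if_neg one_ne_zero]
    simp
  obtain ⟨si, hsi, hle⟩ := h _ hx
  have h0 := Finsupp.le_def.mp hle 0
  have h1 := Finsupp.le_def.mp hle 1
  simp only [Finsupp.coe_add, Pi.add_apply, Finsupp.single_apply] at h0 h1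
  simp only [Set.mem_insert_iff, Set.mem_singleton_iff] at hsi
  rcases hsi with rfl | rfl | rfl | rfl <;>
    simp only [Finsupp.coe_add, Pi.add_apply, Finsupp.single_apply] at h0 h1 <;>
    simp_all <;> omega

end RR16aux


/-- For `I = (X^4, X^3Y, XY^3, Y^4)` in `F[X,Y]`: `~I = (X,Y)^4` (so `I` is not
Ratliff-Rush closed), and `I^n = (X,Y)^{4n}` for every `n ≥ 2` (so every power `I^n`
with `n ≥ 2` is Ratliff-Rush closed). -/
theorem stmt_16 (F : Type*) [Field F]
    (X Y : MvPolynomial (Fin 2) F)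
    (hX : X = MvPolynomial.X 0) (hY : Y = MvPolynomial.X 1)
    (I : Ideal (MvPolynomial (Fin 2) F))
    (hI : I = Ideal.span {X ^ 4, X ^ 3 * Y, X * Y ^ 3, Y ^ 4}) :
    rrPow I 1 = Ideal.span {X, Y} ^ 4 ∧
    rrPow I 1 ≠ I ∧
    (∀ n : ℕ, 2 ≤ n → I ^ n = Ideal.span {X, Y} ^ (4 * n)) ∧
    (∀ n : ℕ, 2 ≤ n → rrPow I n = I ^ n) := by
  subst hX hY hI
  have h1 : rrPow (RR16aux.Ig F) 1 =
      Ideal.span {MvPolynomial.X (0 : Fin 2), MvPolynomial.X 1} ^ 4 := by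
    refine le_antisymm ?_ RR16aux.m4_le_rr
    simpa using RR16aux.rrU (F := F) 1
  refine ⟨h1, ?_, ?_, ?_⟩
  · show rrPow (RR16aux.Ig F) 1 ≠ RR16aux.Ig F
    intro h
    have hm : (MvPolynomial.X 0 ^ 2 * MvPolynomial.X 1 ^ 2 : MvPolynomial (Fin 2) F) ∈
        Ideal.span {MvPolynomial.X (0 : Fin 2), MvPolynomial.X 1} ^ 4 :=
      RR16aux.xy_mem_mpow (by norm_num)
    rw [← h1, h] at hm
    exact RR16aux.x2y2_not_mem hm
  · exact fun n hn => RR16aux.Ig_pow hn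
  · intro n hn
    refine le_antisymm ?_ (RR16aux.le_rr _ n)
    have := RR16aux.rrU (F := F) n
    rwa [← RR16aux.Ig_pow hn] at this
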